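/- Fix an integer m ≥ 1, dimensions d₁,…,d_m ≥ 1, and for each i ∈ {1,…,m} a Hermitian matrix B_i ∈ ℂ^{d_i × d_i} whose smallest eigenvalue μ_i has multiplicity one and whose second-smallest eigenvalue is at least μ_i + g for some g > 0. Let H be the matrix indexed by tuples x, y ∈ Π_{i=1}^m {1,…,d_i} with entries H(x, y) = Σ_{i=1}^m 4^{−(i−1)} · B_i(x_i, y_i) · Π_{j ≠ i} δ_{x_j, y_j} (i.e. H = Σ_i 4^{−(i−1)} I ⊗ ⋯ ⊗ B_i ⊗ ⋯ ⊗ I on ℂ^{d₁} ⊗ ⋯ ⊗ ℂ^{d_m}). Then H is Hermitian, its smallest eigenvalue equals Σ_{i=1}^m 4^{−(i−1)} μ_i and has multiplicity one, and its spectral gap (the difference between its second-smallest and smallest eigenvalues, counted with multiplicity) is at least g/4^{m−1}; in particular it is at least g/4^m. -/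

import Mathlib

open Matrix Polynomial Finset

/-- Characteristic polynomial is invariant under unitary conjugation. -/
lemma myCharpoly_unitary_conj {n : Type*} [Fintype n] [DecidableEq n]
    (U A : Matrix n n ℂ) (hU : U ∈ Matrix.unitaryGroup n ℂ) :
    (U * A * star U).charpoly = A.charpoly := by
  have hUsU : U * star U = 1 := Matrix.mem_unitaryGroup_iff.mp hU
  have hmap : U.map (C : ℂ → ℂ[X]) * (star U).map (C : ℂ → ℂ[X]) = 1 := by
    rw [show (C : ℂ → ℂ[X]) = ⇑(C : ℂ →+* ℂ[X]) from rfl, ← Matrix.map_mul, hUsU,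
      Matrix.map_one _ (map_zero C) (map_one C)]
  have hchar : ∀ (M : Matrix n n ℂ),
      charmatrix M = (X : ℂ[X]) • (1 : Matrix n n ℂ[X]) - M.map (C : ℂ → ℂ[X]) := by
    intro M
    ext i j
    by_cases h : i = j <;>
      simp [charmatrix_apply, Matrix.diagonal_apply, Matrix.one_apply, Matrix.map_apply, h]
  have hconj : charmatrix (U * A * star U)
      = U.map (C : ℂ → ℂ[X]) * charmatrix A * (star U).map (C : ℂ → ℂ[X]) := by
    rw [hchar, hchar, Matrix.mul_sub, Matrix.sub_mul, mul_smul_comm, mul_one,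
      smul_mul_assoc, hmap,
      show (C : ℂ → ℂ[X]) = ⇑(C : ℂ →+* ℂ[X]) from rfl, Matrix.map_mul, Matrix.map_mul]
  have hdet1 : (U.map (C : ℂ → ℂ[X])).det * ((star U).map (C : ℂ → ℂ[X])).det = 1 := by
    rw [← Matrix.det_mul, hmap, Matrix.det_one]
  unfold Matrix.charpoly
  rw [hconj, Matrix.det_mul, Matrix.det_mul]
  calc (U.map (C : ℂ → ℂ[X])).det * (charmatrix A).det * ((star U).map (C : ℂ → ℂ[X])).det
      = (charmatrix A).det * ((U.map (C : ℂ → ℂ[X])).det * ((star U).map (C : ℂ → ℂ[X])).det) := by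
        ring
    _ = (charmatrix A).det := by rw [hdet1, mul_one]

/-- Characteristic polynomial of a diagonal matrix. -/
lemma myCharpoly_diagonal {n : Type*} [Fintype n] [DecidableEq n] (v : n → ℂ) :
    (Matrix.diagonal v).charpoly = ∏ i, (X - C (v i)) := by
  have h : charmatrix (Matrix.diagonal v) = Matrix.diagonal fun i => (X - C (v i)) := by
    ext i j
    by_cases h : i = j
    · subst h; simp [charmatrix_apply]
    · simp [charmatrix_apply, Matrix.diagonal_apply_ne _ h]
  rw [Matrix.charpoly, h, Matrix.det_diagonal]

/-- Collapsing a sum over tuples against a product of Kronecker deltas. -/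
lemma mySum_delta_update {m : ℕ} {d : Fin m → ℕ} (i : Fin m) (x : (j : Fin m) → Fin (d j))
    (F : ((j : Fin m) → Fin (d j)) → ℂ) :
    ∑ y : (j : Fin m) → Fin (d j),
      (∏ j ∈ Finset.univ.erase i, (if x j = y j then (1:ℂ) else 0)) * F y
      = ∑ w : Fin (d i), F (Function.update x i w) := by
  classical
  have h1 : ∀ y : (j : Fin m) → Fin (d j),
      (∏ j ∈ Finset.univ.erase i, (if x j = y j then (1:ℂ) else 0)) * F y
      = if (∀ j ∈ Finset.univ.erase i, x j = y j) then F y else 0 := by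
    intro y
    by_cases h : ∀ j ∈ Finset.univ.erase i, x j = y j
    · simp [Finset.prod_boole, h]
    · simp [Finset.prod_boole, h]
  simp_rw [h1, ← Finset.sum_filter]
  refine Finset.sum_nbij' (fun y => y i) (fun w => Function.update x i w) ?_ ?_ ?_ ?_ ?_
  · intro a _; exact Finset.mem_univ _
  · intro w _
    refine Finset.mem_filter.mpr ⟨Finset.mem_univ _, fun j hj => ?_⟩
    simp [Function.update_of_ne (Finset.ne_of_mem_erase hj)]
  · intro y hy
    funext j
    show Function.update x i (y i) j = y j
    by_cases h : j = i
    · subst h; simp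
    · rw [Function.update_of_ne h]
      exact (Finset.mem_filter.mp hy).2 j (Finset.mem_erase.mpr ⟨h, Finset.mem_univ _⟩)
  · intro w _; simp
  · intro y hy
    have hupd : Function.update x i (y i) = y := by
      funext j
      by_cases h : j = i
      · subst h; simp
      · rw [Function.update_of_ne h]
        exact (Finset.mem_filter.mp hy).2 j (Finset.mem_erase.mpr ⟨h, Finset.mem_univ _⟩)
    exact (congrArg F hupd).symm

/-- The Hamiltonian `H = Σ_i 4^{−(i−1)} I ⊗ ⋯ ⊗ B_i ⊗ ⋯ ⊗ I` on `ℂ^{d₁} ⊗ ⋯ ⊗ ℂ^{d_m}`,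
with entries `H(x, y) = Σ_i 4^{−(i−1)} B_i(x_i, y_i) Π_{j≠i} δ_{x_j, y_j}`
(here `i` is zero-indexed). -/
noncomputable def queryHam (m : ℕ) (d : Fin m → ℕ)
    (B : (i : Fin m) → Matrix (Fin (d i)) (Fin (d i)) ℂ) :
    Matrix ((i : Fin m) → Fin (d i)) ((i : Fin m) → Fin (d i)) ℂ :=
  Matrix.of fun x y =>
    ∑ i : Fin m, ((4 : ℂ)⁻¹) ^ (i : ℕ) * B i (x i) (y i) *
      ∏ j ∈ Finset.univ.erase i, (if x j = y j then (1 : ℂ) else 0)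

/-- If each Hermitian `B_i` has smallest eigenvalue `μ_i` with multiplicity one and all
other eigenvalues at least `μ_i + g`, then `H = Σ_i 4^{−(i−1)} I ⊗ ⋯ ⊗ B_i ⊗ ⋯ ⊗ I` is
Hermitian with smallest eigenvalue `Σ_i 4^{−(i−1)} μ_i` of multiplicity one, and its
spectral gap is at least `g/4^{m−1}`; in particular at least `g/4^m`. -/
theorem queryHam_spectral_gap (m : ℕ) (hm : 1 ≤ m) (d : Fin m → ℕ) (hd : ∀ i, 1 ≤ d i)
    (B : (i : Fin m) → Matrix (Fin (d i)) (Fin (d i)) ℂ)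
    (hB : ∀ i, (B i).IsHermitian)
    (μ : Fin m → ℝ) (g : ℝ) (hg : 0 < g)
    (hmin : ∀ i j, μ i ≤ (hB i).eigenvalues j)
    (hex : ∀ i, ∃ j, (hB i).eigenvalues j = μ i)
    (hmult : ∀ i, (Finset.univ.filter fun j => (hB i).eigenvalues j = μ i).card = 1)
    (hgap : ∀ i j, (hB i).eigenvalues j ≠ μ i → μ i + g ≤ (hB i).eigenvalues j) :
    ∃ hH : (queryHam m d B).IsHermitian,
      (∃ z, hH.eigenvalues z = ∑ i : Fin m, ((4 : ℝ)⁻¹) ^ (i : ℕ) * μ i) ∧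
      (∀ z, ∑ i : Fin m, ((4 : ℝ)⁻¹) ^ (i : ℕ) * μ i ≤ hH.eigenvalues z) ∧
      (Finset.univ.filter fun z =>
        hH.eigenvalues z = ∑ i : Fin m, ((4 : ℝ)⁻¹) ^ (i : ℕ) * μ i).card = 1 ∧
      (∀ z, hH.eigenvalues z ≠ ∑ i : Fin m, ((4 : ℝ)⁻¹) ^ (i : ℕ) * μ i →
        (∑ i : Fin m, ((4 : ℝ)⁻¹) ^ (i : ℕ) * μ i) + g / 4 ^ (m - 1) ≤ hH.eigenvalues z) ∧
      (∀ z, hH.eigenvalues z ≠ ∑ i : Fin m, ((4 : ℝ)⁻¹) ^ (i : ℕ) * μ i →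
        (∑ i : Fin m, ((4 : ℝ)⁻¹) ^ (i : ℕ) * μ i) + g / 4 ^ m ≤ hH.eigenvalues z) := by
  classical
  -- abbreviations
  set E : ℝ := ∑ i : Fin m, ((4 : ℝ)⁻¹) ^ (i : ℕ) * μ i with hE
  have hc_pos : ∀ i : Fin m, (0:ℝ) < ((4:ℝ)⁻¹) ^ (i:ℕ) := fun i => by positivity
  set f : ((i : Fin m) → Fin (d i)) → ℝ :=
    fun z => ∑ i : Fin m, ((4 : ℝ)⁻¹) ^ (i : ℕ) * (hB i).eigenvalues (z i) with hf
  set fc : ((i : Fin m) → Fin (d i)) → ℂ :=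
    fun z => ∑ i : Fin m, ((4 : ℂ)⁻¹) ^ (i : ℕ) * ((hB i).eigenvalues (z i) : ℂ) with hfc
  have hfcf : ∀ z, fc z = ((f z : ℝ) : ℂ) := by
    intro z; simp only [hfc, hf]; push_cast; ring
  -- Hermitian
  have hH : (queryHam m d B).IsHermitian := by
    show (queryHam m d B)ᴴ = queryHam m d B
    ext x y
    simp only [Matrix.conjTranspose_apply, queryHam, Matrix.of_apply, star_sum, star_mul',
      star_prod]
    refine Finset.sum_congr rfl fun i _ => ?_
    have h1 : star (((4:ℂ)⁻¹) ^ (i:ℕ)) = ((4:ℂ)⁻¹) ^ (i:ℕ) := by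
      rw [star_pow, star_inv₀]; norm_num
    have h2 : star (B i (y i) (x i)) = B i (x i) (y i) := (hB i).apply _ _
    have h3 : ∀ j ∈ Finset.univ.erase i,
        star (if y j = x j then (1:ℂ) else 0) = if x j = y j then (1:ℂ) else 0 := by
      intro j _
      by_cases h : x j = y j
      · rw [if_pos h.symm, if_pos h, star_one]
      · rw [if_neg (fun hh => h hh.symm), if_neg h, star_zero]
    rw [Finset.prod_congr rfl h3, h1, h2]
  -- the big unitary
  set Uu : (i : Fin m) → Matrix (Fin (d i)) (Fin (d i)) ℂ :=
    fun i => ((hB i).eigenvectorUnitary : Matrix (Fin (d i)) (Fin (d i)) ℂ) with hUu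
  set U : Matrix ((i : Fin m) → Fin (d i)) ((i : Fin m) → Fin (d i)) ℂ :=
    Matrix.of (fun x z => ∏ j, Uu j (x j) (z j)) with hUdef
  have hUmem : U ∈ Matrix.unitaryGroup ((i : Fin m) → Fin (d i)) ℂ := by
    rw [Matrix.mem_unitaryGroup_iff]
    ext x y
    rw [Matrix.mul_apply]
    have h1 : ∀ z, U x z * (star U) z y = ∏ j, (Uu j (x j) (z j) * star (Uu j (y j) (z j))) := by
      intro z
      rw [Matrix.star_apply, hUdef]
      simp only [Matrix.of_apply]
      rw [star_prod, ← Finset.prod_mul_distrib]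
    simp_rw [h1]
    rw [← Fintype.prod_sum (fun j w => Uu j (x j) w * star (Uu j (y j) w))]
    have h2 : ∀ j : Fin m, (∑ w, Uu j (x j) w * star (Uu j (y j) w))
        = if x j = y j then (1:ℂ) else 0 := by
      intro j
      have hj : Uu j * star (Uu j) = 1 :=
        Matrix.mem_unitaryGroup_iff.mp (hB j).eigenvectorUnitary.2
      have : (∑ w, Uu j (x j) w * star (Uu j (y j) w)) = (Uu j * star (Uu j)) (x j) (y j) := by
        rw [Matrix.mul_apply]
        exact Finset.sum_congr rfl fun w _ => by rw [Matrix.star_apply]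
      rw [this, hj, Matrix.one_apply]
    rw [Finset.prod_congr rfl (fun j _ => h2 j), Finset.prod_boole, Matrix.one_apply]
    simp [funext_iff]
  have hUsU : U * star U = 1 := Matrix.mem_unitaryGroup_iff.mp hUmem
  -- each B i times its eigenvector unitary
  have hBU : ∀ i, B i * Uu i
      = Uu i * Matrix.diagonal (fun k => ((hB i).eigenvalues k : ℂ)) := by
    intro i
    have h2 : star (Uu i) * Uu i = 1 :=
      Matrix.mem_unitaryGroup_iff'.mp (hB i).eigenvectorUnitary.2
    have h1 := (hB i).spectral_theorem
    rw [Unitary.conjStarAlgAut_apply] at h1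
    calc B i * Uu i
        = Uu i * Matrix.diagonal (RCLike.ofReal ∘ (hB i).eigenvalues) * (star (Uu i) * Uu i) := by
          rw [← mul_assoc, ← h1]
      _ = Uu i * Matrix.diagonal (fun k => ((hB i).eigenvalues k : ℂ)) := by
          rw [h2, mul_one]; rfl
  -- similarity computation
  have hsim : queryHam m d B * U = U * Matrix.diagonal fc := by
    ext x z
    rw [Matrix.mul_apply, Matrix.mul_diagonal]
    have step1 : ∀ y, queryHam m d B x y * U y z
        = ∑ i, (∏ j ∈ Finset.univ.erase i, (if x j = y j then (1:ℂ) else 0))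
              * (((4:ℂ)⁻¹) ^ (i:ℕ) * B i (x i) (y i) * ∏ j, Uu j (y j) (z j)) := by
      intro y
      rw [show queryHam m d B x y
          = ∑ i : Fin m, ((4 : ℂ)⁻¹) ^ (i : ℕ) * B i (x i) (y i) *
            ∏ j ∈ Finset.univ.erase i, (if x j = y j then (1 : ℂ) else 0) from rfl,
        show U y z = ∏ j, Uu j (y j) (z j) from rfl, Finset.sum_mul]
      exact Finset.sum_congr rfl fun i _ => by ring
    simp_rw [step1]
    rw [Finset.sum_comm]
    have step2 : ∀ i : Fin m,
        (∑ y : (j : Fin m) → Fin (d j), (∏ j ∈ Finset.univ.erase i, (if x j = y j then (1:ℂ) else 0))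
              * (((4:ℂ)⁻¹) ^ (i:ℕ) * B i (x i) (y i) * ∏ j, Uu j (y j) (z j)))
        = (((4:ℂ)⁻¹) ^ (i:ℕ) * ((hB i).eigenvalues (z i) : ℂ)) * ∏ j, Uu j (x j) (z j) := by
      intro i
      rw [mySum_delta_update i x
        (fun y => ((4:ℂ)⁻¹) ^ (i:ℕ) * B i (x i) (y i) * ∏ j, Uu j (y j) (z j))]
      have hupd : ∀ w : Fin (d i),
          ((4:ℂ)⁻¹) ^ (i:ℕ) * B i (x i) (Function.update x i w i)
            * ∏ j, Uu j (Function.update x i w j) (z j)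
          = (B i (x i) w * Uu i w (z i))
            * (((4:ℂ)⁻¹) ^ (i:ℕ) * ∏ j ∈ Finset.univ.erase i, Uu j (x j) (z j)) := by
        intro w
        have hprod : (∏ j ∈ Finset.univ.erase i, Uu j (Function.update x i w j) (z j))
            = ∏ j ∈ Finset.univ.erase i, Uu j (x j) (z j) :=
          Finset.prod_congr rfl fun j hj => by
            rw [Function.update_of_ne (Finset.ne_of_mem_erase hj)]
        rw [← Finset.mul_prod_erase Finset.univ
            (fun j => Uu j (Function.update x i w j) (z j)) (Finset.mem_univ i)]
        simp only [Function.update_self]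
        rw [hprod]
        ring
      rw [Finset.sum_congr rfl (fun w _ => hupd w), ← Finset.sum_mul]
      have hmulap : (∑ w, B i (x i) w * Uu i w (z i)) = (B i * Uu i) (x i) (z i) :=
        (Matrix.mul_apply).symm
      rw [hmulap, hBU i, Matrix.mul_diagonal]
      rw [← Finset.mul_prod_erase Finset.univ (fun j => Uu j (x j) (z j)) (Finset.mem_univ i)]
      ring
    rw [Finset.sum_congr rfl (fun i _ => step2 i), ← Finset.sum_mul]
    rw [show U x z = ∏ j, Uu j (x j) (z j) from rfl, hfc]
    ring
  have hdecomp : queryHam m d B = U * Matrix.diagonal fc * star U := by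
    rw [← hsim, mul_assoc, hUsU, mul_one]
  -- characteristic polynomial computations
  have hc1 : (queryHam m d B).charpoly = ∏ z, (X - C (fc z)) := by
    rw [hdecomp, myCharpoly_unitary_conj _ _ hUmem, myCharpoly_diagonal]
  have hc2 : (queryHam m d B).charpoly = ∏ z, (X - C ((hH.eigenvalues z : ℝ) : ℂ)) := by
    conv_lhs => rw [hH.spectral_theorem, Unitary.conjStarAlgAut_apply]
    rw [myCharpoly_unitary_conj _ _ hH.eigenvectorUnitary.2, myCharpoly_diagonal]
    rfl
  -- multiset of eigenvalues
  have hprodeq : ∏ z, (X - C ((hH.eigenvalues z : ℝ) : ℂ)) = ∏ z, (X - C (fc z)) :=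
    hc2.symm.trans hc1
  have hroots : Multiset.map (fun z => ((hH.eigenvalues z : ℝ) : ℂ)) Finset.univ.val
      = Multiset.map fc Finset.univ.val := by
    have h1 := congrArg Polynomial.roots hprodeq
    have e1 : (fun z : (i : Fin m) → Fin (d i) => X - C ((hH.eigenvalues z : ℝ) : ℂ))
        = (fun a : ℂ => X - C a) ∘ (fun z => ((hH.eigenvalues z : ℝ) : ℂ)) := rfl
    have e2 : (fun z : (i : Fin m) → Fin (d i) => X - C (fc z))
        = (fun a : ℂ => X - C a) ∘ fc := rfl
    rwa [Finset.prod_eq_multiset_prod, Finset.prod_eq_multiset_prod, e1, e2,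
      ← Multiset.map_map, ← Multiset.map_map,
      Polynomial.roots_multiset_prod_X_sub_C, Polynomial.roots_multiset_prod_X_sub_C] at h1
  have key : Multiset.map hH.eigenvalues Finset.univ.val = Multiset.map f Finset.univ.val := by
    apply Multiset.map_injective Complex.ofReal_injective
    rw [Multiset.map_map, Multiset.map_map]
    have h2 : (Complex.ofReal ∘ f) = fc := by funext z; rw [Function.comp_apply, hfcf]
    rw [h2]
    exact hroots
  -- combinatorics on f
  set z₀ : (i : Fin m) → Fin (d i) := fun i => (hex i).choose with hz₀def
  have hz₀ : ∀ i, (hB i).eigenvalues (z₀ i) = μ i := fun i => (hex i).choose_spec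
  have hfE : ∀ z, E ≤ f z := by
    intro z
    simp only [hE, hf]
    exact Finset.sum_le_sum fun i _ =>
      mul_le_mul_of_nonneg_left (hmin i (z i)) (hc_pos i).le
  have hf0 : f z₀ = E := by
    simp only [hE, hf]
    exact Finset.sum_congr rfl fun i _ => by rw [hz₀ i]
  have heiguniq : ∀ i (k : Fin (d i)), (hB i).eigenvalues k = μ i → k = z₀ i := by
    intro i k hk
    obtain ⟨a, ha⟩ := Finset.card_eq_one.mp (hmult i)
    have h1 : k ∈ Finset.univ.filter fun j => (hB i).eigenvalues j = μ i :=
      Finset.mem_filter.mpr ⟨Finset.mem_univ _, hk⟩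
    have h2 : z₀ i ∈ Finset.univ.filter fun j => (hB i).eigenvalues j = μ i :=
      Finset.mem_filter.mpr ⟨Finset.mem_univ _, hz₀ i⟩
    rw [ha, Finset.mem_singleton] at h1 h2
    rw [h1, h2]
  have huniq : ∀ z, f z = E → z = z₀ := by
    intro z hz
    have hterm : ∀ i ∈ (Finset.univ : Finset (Fin m)), ((4:ℝ)⁻¹) ^ ((i : Fin m) : ℕ) * μ i
        ≤ ((4:ℝ)⁻¹) ^ ((i : Fin m) : ℕ) * (hB i).eigenvalues (z i) := fun i _ =>
      mul_le_mul_of_nonneg_left (hmin i (z i)) (hc_pos i).le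
    have heq : ∀ i ∈ (Finset.univ : Finset (Fin m)), ((4:ℝ)⁻¹) ^ ((i : Fin m) : ℕ) * μ i
        = ((4:ℝ)⁻¹) ^ ((i : Fin m) : ℕ) * (hB i).eigenvalues (z i) := by
      rw [← Finset.sum_eq_sum_iff_of_le hterm]
      simp only [hf] at hz
      rw [hz, hE]
    funext i
    apply heiguniq
    have := heq i (Finset.mem_univ i)
    have h4 := mul_left_cancel₀ (hc_pos i).ne' this.symm
    exact h4
  have hgapf : ∀ z, f z ≠ E → E + g * ((4:ℝ)⁻¹) ^ (m - 1) ≤ f z := by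
    intro z hz
    have hzne : z ≠ z₀ := fun h => hz (h ▸ hf0)
    obtain ⟨i, hi⟩ : ∃ i, z i ≠ z₀ i := by
      by_contra h
      push_neg at h
      exact hzne (funext h)
    have heig : (hB i).eigenvalues (z i) ≠ μ i := fun h => hi (heiguniq i (z i) h)
    have hgi : μ i + g ≤ (hB i).eigenvalues (z i) := hgap i (z i) heig
    have hsum : ((4:ℝ)⁻¹) ^ (i:ℕ) * g
        ≤ ∑ j : Fin m, ((4:ℝ)⁻¹) ^ (j:ℕ) * ((hB j).eigenvalues (z j) - μ j) := by
      have h1 : ((4:ℝ)⁻¹) ^ (i:ℕ) * g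
          ≤ ((4:ℝ)⁻¹) ^ (i:ℕ) * ((hB i).eigenvalues (z i) - μ i) := by
        apply mul_le_mul_of_nonneg_left _ (hc_pos i).le
        linarith
      refine h1.trans (Finset.single_le_sum (f := fun j : Fin m =>
        ((4:ℝ)⁻¹) ^ (j:ℕ) * ((hB j).eigenvalues (z j) - μ j)) ?_ (Finset.mem_univ i))
      intro j _
      apply mul_nonneg (hc_pos j).le
      linarith [hmin j (z j)]
    have hpow : ((4:ℝ)⁻¹) ^ (m - 1) ≤ ((4:ℝ)⁻¹) ^ (i:ℕ) := by
      apply pow_le_pow_of_le_one (by norm_num) (by norm_num)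
      exact Nat.le_sub_one_of_lt i.isLt
    have h2 : f z - E = ∑ j : Fin m, ((4:ℝ)⁻¹) ^ (j:ℕ) * ((hB j).eigenvalues (z j) - μ j) := by
      simp only [hf, hE]
      rw [← Finset.sum_sub_distrib]
      exact Finset.sum_congr rfl fun j _ => by ring
    nlinarith [hsum, hpow, hg]
  -- transfer to eigenvalues of H
  have hsurj : ∀ z, ∃ w, hH.eigenvalues z = f w := by
    intro z
    have h1 : hH.eigenvalues z ∈ Multiset.map f Finset.univ.val := by
      rw [← key]
      exact Multiset.mem_map_of_mem _ (Finset.mem_val.mpr (Finset.mem_univ z))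
    obtain ⟨w, _, hw⟩ := Multiset.mem_map.mp h1
    exact ⟨w, hw.symm⟩
  refine ⟨hH, ?_, ?_, ?_, ?_, ?_⟩
  · -- existence
    have h1 : E ∈ Multiset.map hH.eigenvalues Finset.univ.val := by
      rw [key]
      exact Multiset.mem_map.mpr ⟨z₀, Finset.mem_val.mpr (Finset.mem_univ z₀), hf0⟩
    obtain ⟨z, _, hz⟩ := Multiset.mem_map.mp h1
    exact ⟨z, hz⟩
  · -- lower bound
    intro z
    obtain ⟨w, hw⟩ := hsurj z
    rw [hw]
    exact hfE w
  · -- multiplicity one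
    have hcount := congrArg (Multiset.countP (fun a : ℝ => a = E)) key
    rw [Multiset.countP_map, Multiset.countP_map] at hcount
    have hfil : (Finset.univ.filter fun z => f z = E) = {z₀} := by
      ext z
      simp only [Finset.mem_filter, Finset.mem_univ, true_and, Finset.mem_singleton]
      exact ⟨fun h => huniq z h, fun h => h ▸ hf0⟩
    have h2 : (Finset.univ.filter fun z => hH.eigenvalues z = E).card
        = (Finset.univ.filter fun z => f z = E).card := by
      rw [Finset.card_def, Finset.card_def, Finset.filter_val, Finset.filter_val]
      exact hcount
    rw [h2, hfil, Finset.card_singleton]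
  · -- gap m-1
    intro z hz
    obtain ⟨w, hw⟩ := hsurj z
    rw [hw] at hz ⊢
    have h1 := hgapf w hz
    have h2 : g / 4 ^ (m - 1) = g * ((4:ℝ)⁻¹) ^ (m - 1) := by
      rw [div_eq_mul_inv, ← inv_pow]
    rw [h2]
    exact h1
  · -- gap m
    intro z hz
    obtain ⟨w, hw⟩ := hsurj z
    rw [hw] at hz ⊢
    have h1 := hgapf w hz
    have h2 : g / 4 ^ m ≤ g * ((4:ℝ)⁻¹) ^ (m - 1) := by
      rw [div_eq_mul_inv, ← inv_pow]
      apply mul_le_mul_of_nonneg_left _ hg.le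
      apply pow_le_pow_of_le_one (by norm_num) (by norm_num)
      omega
    linarith
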